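/- Let Λ, A, B be additive abelian groups, let h : Λ →+ A and H' : Λ →+ B be group homomorphisms, and define H : Λ →+ A × B by H(x) = (h(x), H'(x)). Then the index of the range of H in A × B equals the index of the range of H' in B multiplied by the index of the subgroup h(ker H') in A (with the convention that the index is 0 when infinite). -/

import Mathlib

/-- For group homomorphisms `h : Λ →+ A`, `H' : Λ →+ B` and
`H = (h, H') : Λ →+ A × B`, the index of the range of `H` in `A × B` equals the index
of the range of `H'` in `B` multiplied by the index of `h(ker H')` in `A`
(index `0` means infinite index). -/
theorem index_range_prod_eq {Λ A B : Type*}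
    [AddCommGroup Λ] [AddCommGroup A] [AddCommGroup B]
    (h : Λ →+ A) (H' : Λ →+ B) (H : Λ →+ A × B)
    (hH : ∀ x : Λ, H x = (h x, H' x)) :
    H.range.index = H'.range.index * (H'.ker.map h).index := by
  set R := H.range with hR
  set ks := (AddMonoidHom.snd A B).ker with hks
  -- range of inl equals kernel of snd
  have hinl : (AddMonoidHom.inl A B).range = ks := by
    ext ⟨a, b⟩
    simp [hks, AddMonoidHom.mem_ker, AddSubgroup.mem_prod, Prod.ext_iff, eq_comm]
  -- H'.range is the image of R under snd
  have h1 : H'.range = R.map (AddMonoidHom.snd A B) := by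
    ext b
    constructor
    · rintro ⟨x, rfl⟩
      exact ⟨H x, ⟨x, rfl⟩, by rw [hH]; rfl⟩
    · rintro ⟨p, ⟨x, rfl⟩, rfl⟩
      exact ⟨x, by rw [hH]; rfl⟩
  -- h(ker H') is the preimage of R under inl
  have h2 : H'.ker.map h = R.comap (AddMonoidHom.inl A B) := by
    ext a
    constructor
    · rintro ⟨x, hx, rfl⟩
      exact ⟨x, by rw [hH, AddMonoidHom.mem_ker.mp hx]; rfl⟩
    · rintro ⟨x, hx⟩
      rw [hH] at hx
      have ha : h x = a := congrArg Prod.fst hx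
      have hb : H' x = 0 := congrArg Prod.snd hx
      exact ⟨x, hb, ha⟩
  have hsurj : Function.Surjective (AddMonoidHom.snd A B) := fun b => ⟨(0, b), rfl⟩
  have h3 : (R.map (AddMonoidHom.snd A B)).index
      = (R ⊔ ks).index * (AddMonoidHom.snd A B).range.index :=
    AddSubgroup.index_map R (AddMonoidHom.snd A B)
  rw [AddMonoidHom.range_eq_top_of_surjective _ hsurj, AddSubgroup.index_top, mul_one] at h3
  have h4 : (H'.ker.map h).index = R.relIndex ks := by
    rw [h2, AddSubgroup.index_comap, hinl]
  have h5 : R.relIndex (R ⊔ ks) * (R ⊔ ks).index = R.index :=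
    AddSubgroup.relIndex_mul_index le_sup_left
  have h6 : R.relIndex (R ⊔ ks) = R.relIndex ks := AddSubgroup.relIndex_sup_left ks R
  rw [h1, h3, h4, ← h6, mul_comm, h5]
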